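/- Let U be a metric space admitting a Lipschitz strong deformation retraction to a point p ∈ U, and fix L > 6. Then the cone K(U) admits a Lipschitz strong deformation retraction onto its base U × {0} = {[x,0] : x ∈ U}. -/

import Mathlib

open Metric Set

/-- The cone distance on `M × [0,L]` (representatives of the cone
`K(M) = M × [0,L] / (M × {L})`). Two representatives are identified in the cone iff their
cone distance is `0`. -/
noncomputable def coneDist {M : Type*} [PseudoMetricSpace M] (L : ℝ) (c c' : M × ℝ) : ℝ :=
  Real.sqrt ((L - c.2) ^ 2 + (L - c'.2) ^ 2 -
    2 * (L - c.2) * (L - c'.2) * Real.cos (min Real.pi (dist c.1 c'.1)))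

/-- A metric space `X` admits a *Lipschitz strong deformation retraction to a point*
`p ∈ X`. -/
def SpaceLipSDRToPoint (X : Type*) [MetricSpace X] (p : X) : Prop :=
  ∃ (F : X × unitInterval → X) (K : NNReal), LipschitzWith K F ∧
    (∀ x, F (x, 0) = x) ∧ (∀ x, F (x, 1) = p) ∧ (∀ t, F (p, t) = p)

set_option maxHeartbeats 1000000

lemma sqrt_upper (r r' θ : ℝ) (hr : 0 ≤ r) (hr' : 0 ≤ r') (hθ0 : 0 ≤ θ) (hθ4 : θ ≤ 4) :
    Real.sqrt (r ^ 2 + r' ^ 2 - 2 * r * r' * Real.cos θ) ≤ 5 * |r - r'| + min r r' * θ := by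
  have hcos : 1 - θ ^ 2 / 2 ≤ Real.cos θ := Real.one_sub_sq_div_two_le_cos
  have hsq : Real.sqrt (r * r') ^ 2 = r * r' := Real.sq_sqrt (mul_nonneg hr hr')
  have hsqnn : 0 ≤ Real.sqrt (r * r') := Real.sqrt_nonneg _
  have h1 : Real.sqrt (r ^ 2 + r' ^ 2 - 2 * r * r' * Real.cos θ) ≤
      |r - r'| + Real.sqrt (r * r') * θ := by
    have hrhs : 0 ≤ |r - r'| + Real.sqrt (r * r') * θ := by positivity
    rw [show |r - r'| + Real.sqrt (r * r') * θ =
        Real.sqrt ((|r - r'| + Real.sqrt (r * r') * θ) ^ 2) from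
      (Real.sqrt_sq hrhs).symm]
    apply Real.sqrt_le_sqrt
    nlinarith [mul_nonneg hr hr', abs_nonneg (r - r'), sq_abs (r - r'),
      mul_nonneg (mul_nonneg hr hr') hθ0,
      mul_nonneg (mul_nonneg (abs_nonneg (r - r')) hsqnn) hθ0,
      mul_nonneg (mul_nonneg hr hr') (sq_nonneg θ)]
  have hmax0 : (0:ℝ) ≤ max r r' := le_trans hr (le_max_left _ _)
  have h2 : Real.sqrt (r * r') ≤ min r r' + |r - r'| := by
    have hs : Real.sqrt (r * r') ≤ max r r' := by
      rw [show max r r' = Real.sqrt ((max r r') ^ 2) from (Real.sqrt_sq hmax0).symm]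
      apply Real.sqrt_le_sqrt
      nlinarith [le_max_left r r', le_max_right r r']
    refine hs.trans ?_
    rcases le_total r r' with h | h
    · rw [min_eq_left h, max_eq_right h, abs_of_nonpos (by linarith)]; linarith
    · rw [min_eq_right h, max_eq_left h, abs_of_nonneg (by linarith)]; linarith
  have h3 : Real.sqrt (r * r') * θ ≤ min r r' * θ + |r - r'| * θ := by
    nlinarith [mul_le_mul_of_nonneg_right h2 hθ0]
  have h4 : |r - r'| * θ ≤ |r - r'| * 4 := mul_le_mul_of_nonneg_left hθ4 (abs_nonneg _)
  linarith

lemma sqrt_lower1 (r r' θ : ℝ) (hr : 0 ≤ r) (hr' : 0 ≤ r') :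
    |r - r'| ≤ Real.sqrt (r ^ 2 + r' ^ 2 - 2 * r * r' * Real.cos θ) := by
  rw [show |r - r'| = Real.sqrt ((r - r') ^ 2) from (Real.sqrt_sq_eq_abs _).symm]
  apply Real.sqrt_le_sqrt
  nlinarith [mul_nonneg hr hr', Real.cos_le_one θ]

lemma sqrt_lower2 (r r' θ : ℝ) (hr : 0 ≤ r) (hr' : 0 ≤ r') (hθ0 : 0 ≤ θ)
    (hθπ : θ ≤ Real.pi) :
    2 * (min r r') * θ ≤ Real.pi * Real.sqrt (r ^ 2 + r' ^ 2 - 2 * r * r' * Real.cos θ) := by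
  have hπ : (3:ℝ) < Real.pi := Real.pi_gt_three
  have hπ2 : (0:ℝ) < Real.pi ^ 2 := by positivity
  have hcos2 : Real.cos θ ≤ 1 - 2 / Real.pi ^ 2 * θ ^ 2 :=
    Real.cos_le_one_sub_mul_cos_sq (by rw [abs_of_nonneg hθ0]; exact hθπ)
  have h2θ : 2 * θ ^ 2 ≤ Real.pi ^ 2 * (1 - Real.cos θ) := by
    have h := mul_le_mul_of_nonneg_left hcos2 hπ2.le
    have he : Real.pi ^ 2 * (1 - 2 / Real.pi ^ 2 * θ ^ 2) = Real.pi ^ 2 - 2 * θ ^ 2 := by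
      field_simp
    rw [he] at h
    nlinarith
  have hm : 0 ≤ min r r' := le_min hr hr'
  have h1 : min r r' ≤ r := min_le_left _ _
  have h2 : min r r' ≤ r' := min_le_right _ _
  have hkey : (2 * (min r r') * θ / Real.pi) ^ 2 ≤ r ^ 2 + r' ^ 2 - 2 * r * r' * Real.cos θ := by
    rw [div_pow, div_le_iff₀ hπ2]
    have hmm : (min r r') * (min r r') ≤ r * r' := mul_le_mul h1 h2 hm hr
    have hstep : 2 * (r * r') * (2 * θ ^ 2) ≤ 2 * (r * r') * (Real.pi ^ 2 * (1 - Real.cos θ)) :=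
      mul_le_mul_of_nonneg_left h2θ (by positivity)
    nlinarith [sq_nonneg (r - r'), mul_le_mul_of_nonneg_right hmm
      (mul_nonneg (by norm_num : (0:ℝ) ≤ 4) (sq_nonneg θ))]
  have hs := Real.sqrt_le_sqrt hkey
  rw [Real.sqrt_sq (by positivity)] at hs
  calc 2 * (min r r') * θ = (2 * (min r r') * θ / Real.pi) * Real.pi := by field_simp
    _ ≤ Real.sqrt (r ^ 2 + r' ^ 2 - 2 * r * r' * Real.cos θ) * Real.pi :=
        mul_le_mul_of_nonneg_right hs (by linarith)
    _ = _ := mul_comm _ _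

lemma coneDist_le_D {M : Type*} [PseudoMetricSpace M] {L : ℝ} (c c' : M × ℝ)
    (hc : c.2 ≤ L) (hc' : c'.2 ≤ L) :
    coneDist L c c' ≤
      5 * (|c.2 - c'.2| + min (L - c.2) (L - c'.2) * min Real.pi (dist c.1 c'.1)) := by
  have hθ0 : 0 ≤ min Real.pi (dist c.1 c'.1) := le_min Real.pi_nonneg dist_nonneg
  have hθ4 : min Real.pi (dist c.1 c'.1) ≤ 4 := (min_le_left _ _).trans Real.pi_le_four
  have h := sqrt_upper (L - c.2) (L - c'.2) (min Real.pi (dist c.1 c'.1))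
    (by linarith) (by linarith) hθ0 hθ4
  have habs : |L - c.2 - (L - c'.2)| = |c.2 - c'.2| := by
    rw [show L - c.2 - (L - c'.2) = -(c.2 - c'.2) by ring, abs_neg]
  rw [coneDist]
  rw [habs] at h
  have hm : 0 ≤ min (L - c.2) (L - c'.2) := le_min (by linarith) (by linarith)
  nlinarith [abs_nonneg (c.2 - c'.2), mul_nonneg hm hθ0]

lemma D_le_coneDist {M : Type*} [PseudoMetricSpace M] {L : ℝ} (c c' : M × ℝ)
    (hc : c.2 ≤ L) (hc' : c'.2 ≤ L) :
    |c.2 - c'.2| + min (L - c.2) (L - c'.2) * min Real.pi (dist c.1 c'.1) ≤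
      Real.pi * coneDist L c c' := by
  have hθ0 : 0 ≤ min Real.pi (dist c.1 c'.1) := le_min Real.pi_nonneg dist_nonneg
  have hθπ : min Real.pi (dist c.1 c'.1) ≤ Real.pi := min_le_left _ _
  have h1 := sqrt_lower1 (L - c.2) (L - c'.2) (min Real.pi (dist c.1 c'.1))
    (by linarith) (by linarith)
  have h2 := sqrt_lower2 (L - c.2) (L - c'.2) (min Real.pi (dist c.1 c'.1))
    (by linarith) (by linarith) hθ0 hθπ
  have habs : |L - c.2 - (L - c'.2)| = |c.2 - c'.2| := by
    rw [show L - c.2 - (L - c'.2) = -(c.2 - c'.2) by ring, abs_neg]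
  rw [coneDist]
  rw [habs] at h1
  have hπ : (3:ℝ) < Real.pi := Real.pi_gt_three
  set S := Real.sqrt ((L - c.2) ^ 2 + (L - c'.2) ^ 2 -
    2 * (L - c.2) * (L - c'.2) * Real.cos (min Real.pi (dist c.1 c'.1))) with hS
  have hS0 : 0 ≤ S := Real.sqrt_nonneg _
  nlinarith

lemma minpi_lip {Kr d e m : ℝ} (hK : 1 ≤ Kr) (hd : 0 ≤ d) (he : 0 ≤ e)
    (hm : m ≤ Kr * max d e) : min Real.pi m ≤ Kr * (min Real.pi d + e) := by
  rcases le_total d Real.pi with h | h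
  · rw [min_eq_right h]
    calc min Real.pi m ≤ m := min_le_right _ _
      _ ≤ Kr * max d e := hm
      _ ≤ Kr * (d + e) := by
          apply mul_le_mul_of_nonneg_left _ (by linarith)
          exact max_le (by linarith) (by linarith)
  · rw [min_eq_left h]
    have hπ0 : 0 ≤ Real.pi := Real.pi_nonneg
    calc min Real.pi m ≤ Real.pi := min_le_left _ _
      _ ≤ Kr * (Real.pi + e) := by nlinarith

lemma minpi_tri {u v w : ℝ} (hv : 0 ≤ v) (hw : 0 ≤ w) (huv : u ≤ v + w) :
    min Real.pi u ≤ min Real.pi v + min Real.pi w := by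
  have hπ0 : 0 ≤ Real.pi := Real.pi_nonneg
  rcases le_total Real.pi v with h | h
  · calc min Real.pi u ≤ Real.pi := min_le_left _ _
      _ = min Real.pi v := (min_eq_left h).symm
      _ ≤ _ := le_add_of_nonneg_right (le_min hπ0 hw)
  · rcases le_total Real.pi w with h' | h'
    · calc min Real.pi u ≤ Real.pi := min_le_left _ _
        _ = min Real.pi w := (min_eq_left h').symm
        _ ≤ _ := le_add_of_nonneg_left (le_min hπ0 hv)
    · rw [min_eq_right h, min_eq_right h']
      exact (min_le_right _ _).trans huv

lemma clamp_lip (v w : ℝ) : |max 0 (min 1 v) - max 0 (min 1 w)| ≤ |v - w| := by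
  have h1 := abs_max_sub_max_le_max (0:ℝ) (min 1 v) 0 (min 1 w)
  have h2 := abs_min_sub_min_le_max (1:ℝ) v 1 w
  rw [sub_self, abs_zero] at h1 h2
  refine h1.trans ?_
  rw [max_eq_right (abs_nonneg _)]
  refine h2.trans ?_
  rw [max_eq_right (abs_nonneg _)]


/-- If a metric space `U` admits a Lipschitz strong deformation
retraction to a point `p ∈ U`, and `L > 6`, then the cone `K(U)` admits a Lipschitz strong
deformation retraction onto its base `U × {0}`.  This is expressed on representatives in
`U × [0,L]`, with Lipschitz continuity measured by the cone distance (and the sup product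
with `[0,1]`), and with equalities in the cone expressed as vanishing of the cone
distance. -/
theorem cone_lipSDR_onto_base {U : Type*} [MetricSpace U] (p : U)
    (h : SpaceLipSDRToPoint U p) (L : ℝ) (hL : 6 < L) :
    ∃ (F : (U × ℝ) × unitInterval → U × ℝ) (K : NNReal),
      (∀ c : U × ℝ, c.2 ∈ Icc 0 L → ∀ t : unitInterval, (F (c, t)).2 ∈ Icc 0 L) ∧
      (∀ c c' : U × ℝ, c.2 ∈ Icc 0 L → c'.2 ∈ Icc 0 L → ∀ s t : unitInterval,
        coneDist L (F (c, s)) (F (c', t)) ≤ K * max (coneDist L c c') (dist s t)) ∧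
      (∀ c : U × ℝ, c.2 ∈ Icc 0 L → coneDist L (F (c, 0)) c = 0) ∧
      (∀ c : U × ℝ, c.2 ∈ Icc 0 L → (F (c, 1)).2 = 0) ∧
      (∀ c : U × ℝ, c.2 = 0 → ∀ t : unitInterval, F (c, t) = c) := by
  obtain ⟨f, K₀, hlip, hf0, hf1, hfp⟩ := h
  set Kr : ℝ := max (K₀ : ℝ) 1 with hKrdef
  have hKr1 : (1:ℝ) ≤ Kr := le_max_right _ _
  have hKr0 : (0:ℝ) ≤ Kr := by linarith
  have hπ3 : (3:ℝ) < Real.pi := Real.pi_gt_three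
  have hπ4 : Real.pi ≤ 4 := Real.pi_le_four
  have hLnn : (0:ℝ) ≤ L := by linarith
  have hKπ0 : (0:ℝ) ≤ Kr + Real.pi := by linarith
  have hflip : ∀ (x x' : U) (u u' : unitInterval),
      dist (f (x, u)) (f (x', u')) ≤ Kr * max (dist x x') (dist u u') := by
    intro x x' u u'
    have hd := hlip.dist_le_mul (x, u) (x', u')
    rw [Prod.dist_eq] at hd
    exact hd.trans (mul_le_mul_of_nonneg_right (le_max_left _ _)
      (le_trans dist_nonneg (le_max_right _ _)))
  set g : ℝ → ℝ := fun a => max 0 (min 1 (a - L + 2)) with hgdef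
  have hg0 : ∀ a : ℝ, 0 ≤ g a := fun a => le_max_left _ _
  have hg1 : ∀ a : ℝ, g a ≤ 1 := fun a => max_le zero_le_one (min_le_left _ _)
  have hgL : ∀ a : ℝ, L - 1 ≤ a → g a = 1 := by
    intro a ha
    rw [hgdef]
    simp only
    rw [min_eq_left (by linarith), max_eq_right zero_le_one]
  have hgzero : g 0 = 0 := by
    rw [hgdef]
    simp only
    rw [min_eq_right (by linarith), max_eq_left (by linarith)]
  have hglip : ∀ a a' : ℝ, |g a - g a'| ≤ |a - a'| := by
    intro a a'
    rw [hgdef]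
    simp only
    refine (clamp_lip _ _).trans ?_
    rw [show a - L + 2 - (a' - L + 2) = a - a' by ring]
  have hmem : ∀ v : ℝ, max 0 (min 1 v) ∈ unitInterval :=
    fun v => ⟨le_max_left _ _, max_le zero_le_one (min_le_left _ _)⟩
  set σ : ℝ → unitInterval := fun v => ⟨max 0 (min 1 v), hmem v⟩ with hσdef
  have hσlip : ∀ v w : ℝ, dist (σ v) (σ w) ≤ |v - w| := by
    intro v w
    rw [Subtype.dist_eq, Real.dist_eq]
    exact clamp_lip v w
  have hσzero : σ (0:ℝ) = 0 := by
    rw [hσdef]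
    apply Subtype.ext
    norm_num
  have hσone : σ (1:ℝ) = 1 := by
    rw [hσdef]
    apply Subtype.ext
    norm_num
  -- heights stay in range
  have hht : ∀ (u : unitInterval) (a : ℝ), a ∈ Icc 0 L → min 1 (2 - 2*(u:ℝ)) * a ∈ Icc 0 L := by
    intro u a ha
    have hu1 : (u:ℝ) ≤ 1 := u.2.2
    have hb0 : 0 ≤ min 1 (2 - 2*(u:ℝ)) := le_min zero_le_one (by linarith)
    have hb1 : min 1 (2 - 2*(u:ℝ)) ≤ 1 := min_le_left _ _
    have := mul_le_mul_of_nonneg_right hb1 ha.1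
    exact ⟨mul_nonneg hb0 ha.1, by linarith only [this, ha.1, ha.2]⟩
  -- the main D-estimate
  have hbound : ∀ (x x' : U) (a a' : ℝ), a ∈ Icc 0 L → a' ∈ Icc 0 L →
      ∀ s t : unitInterval,
      |min 1 (2 - 2 * (s:ℝ)) * a - min 1 (2 - 2 * (t:ℝ)) * a'| +
        min (L - min 1 (2 - 2 * (s:ℝ)) * a) (L - min 1 (2 - 2 * (t:ℝ)) * a') *
          min Real.pi (dist (f (x, σ (min (2 * (s:ℝ)) 1 * g a)))
            (f (x', σ (min (2 * (t:ℝ)) 1 * g a')))) ≤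
        10 * L * (Kr + Real.pi) *
          ((|a - a'| + min (L - a) (L - a') * min Real.pi (dist x x')) + |(s:ℝ) - (t:ℝ)|) := by
    intro x x' a a' ha ha' s t
    obtain ⟨ha0, haL⟩ := ha
    obtain ⟨ha0', haL'⟩ := ha'
    have hs0 : (0:ℝ) ≤ (s:ℝ) := s.2.1
    have hs1 : (s:ℝ) ≤ 1 := s.2.2
    have ht0 : (0:ℝ) ≤ (t:ℝ) := t.2.1
    have ht1 : (t:ℝ) ≤ 1 := t.2.2
    set α : ℝ := min (2 * (s:ℝ)) 1 with hα
    set α' : ℝ := min (2 * (t:ℝ)) 1 with hα'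
    set β : ℝ := min 1 (2 - 2 * (s:ℝ)) with hβ
    set β' : ℝ := min 1 (2 - 2 * (t:ℝ)) with hβ'
    set θ : ℝ := min Real.pi (dist x x') with hθ
    set m : ℝ := min (L - a) (L - a') with hm
    have hθ0 : 0 ≤ θ := le_min Real.pi_nonneg dist_nonneg
    have hθπ : θ ≤ Real.pi := min_le_left _ _
    have hm0 : 0 ≤ m := le_min (by linarith) (by linarith)
    have hma : m ≤ L - a := min_le_left _ _
    have hma' : m ≤ L - a' := min_le_right _ _
    have hα'0 : 0 ≤ α' := le_min (by linarith) (by norm_num)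
    have hα'1 : α' ≤ 1 := min_le_right _ _
    have hβ0 : 0 ≤ β := le_min (by norm_num) (by linarith)
    have hβ1 : β ≤ 1 := min_le_left _ _
    have hβ'0 : 0 ≤ β' := le_min (by norm_num) (by linarith)
    have hβ'1 : β' ≤ 1 := min_le_left _ _
    have hst0 : 0 ≤ |(s:ℝ) - (t:ℝ)| := abs_nonneg _
    have hαα' : |α - α'| ≤ 2 * |(s:ℝ) - (t:ℝ)| := by
      have hh := abs_min_sub_min_le_max (2*(s:ℝ)) 1 (2*(t:ℝ)) 1
      rw [sub_self, abs_zero] at hh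
      refine hh.trans ?_
      rw [max_eq_left (abs_nonneg _),
        show 2*(s:ℝ) - 2*(t:ℝ) = 2*((s:ℝ) - (t:ℝ)) by ring, abs_mul, abs_two]
    have hββ' : |β - β'| ≤ 2 * |(s:ℝ) - (t:ℝ)| := by
      have hh := abs_min_sub_min_le_max (1:ℝ) (2 - 2*(s:ℝ)) 1 (2 - 2*(t:ℝ))
      rw [sub_self, abs_zero] at hh
      refine hh.trans ?_
      rw [max_eq_right (abs_nonneg _),
        show 2 - 2*(s:ℝ) - (2 - 2*(t:ℝ)) = 2*((t:ℝ) - (s:ℝ)) by ring, abs_mul, abs_two,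
        abs_sub_comm]
    have hpart1 : |β * a - β' * a'| ≤ |a - a'| + 2 * L * |(s:ℝ) - (t:ℝ)| := by
      rw [show β * a - β' * a' = β * (a - a') + a' * (β - β') by ring]
      refine (abs_add_le _ _).trans ?_
      rw [abs_mul, abs_mul, abs_of_nonneg hβ0, abs_of_nonneg ha0']
      have h1 : β * |a - a'| ≤ 1 * |a - a'| := mul_le_mul_of_nonneg_right hβ1 (abs_nonneg _)
      have h2 : a' * |β - β'| ≤ L * (2 * |(s:ℝ) - (t:ℝ)|) :=
        mul_le_mul haL' hββ' (abs_nonneg _) hLnn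
      linarith
    have hβa : β * a ≤ a := by
      calc β * a ≤ 1 * a := mul_le_mul_of_nonneg_right hβ1 ha0
        _ = a := one_mul a
    have hβa' : β' * a' ≤ a' := by
      calc β' * a' ≤ 1 * a' := mul_le_mul_of_nonneg_right hβ'1 ha0'
        _ = a' := one_mul a'
    have hβa0 : 0 ≤ β * a := mul_nonneg hβ0 ha0
    have hβa0' : 0 ≤ β' * a' := mul_nonneg hβ'0 ha0'
    set M : ℝ := min (L - β * a) (L - β' * a') with hM
    have hM0 : 0 ≤ M := le_min (by linarith) (by linarith)
    have hML : M ≤ L := (min_le_left _ _).trans (by linarith)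
    have hT1 : dist (f (x, σ (α * g a))) (f (x, σ (α' * g a))) ≤ Kr * (2 * |(s:ℝ) - (t:ℝ)|) := by
      have hh := hflip x x (σ (α * g a)) (σ (α' * g a))
      rw [dist_self, max_eq_right dist_nonneg] at hh
      refine hh.trans (mul_le_mul_of_nonneg_left ?_ hKr0)
      refine (hσlip _ _).trans ?_
      rw [show α * g a - α' * g a = (α - α') * g a by ring, abs_mul, abs_of_nonneg (hg0 a)]
      have hq := mul_le_mul hαα' (hg1 a) (hg0 a) (by positivity)
      linarith only [hq]
    have hdist2 : dist (f (x, σ (α' * g a))) (f (x', σ (α' * g a'))) ≤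
        Kr * max (dist x x') |a - a'| := by
      have hh := hflip x x' (σ (α' * g a)) (σ (α' * g a'))
      refine hh.trans (mul_le_mul_of_nonneg_left (max_le_max le_rfl ?_) hKr0)
      refine (hσlip _ _).trans ?_
      rw [show α' * g a - α' * g a' = α' * (g a - g a') by ring, abs_mul, abs_of_nonneg hα'0]
      have hq := mul_le_mul hα'1 (hglip a a') (abs_nonneg _) zero_le_one
      linarith only [hq]
    set T : ℝ := min Real.pi (dist (f (x, σ (α' * g a))) (f (x', σ (α' * g a')))) with hTdef
    have hT2gen : T ≤ Kr * (θ + |a - a'|) :=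
      minpi_lip hKr1 dist_nonneg (abs_nonneg _) hdist2
    have hT2π : T ≤ Real.pi := min_le_left _ _
    have hT20 : 0 ≤ T := le_min Real.pi_nonneg dist_nonneg
    have habs1 : a - a' ≤ |a - a'| := le_abs_self _
    have habs2 : a' - a ≤ |a - a'| := by rw [abs_sub_comm]; exact le_abs_self _
    have hmθ0 : 0 ≤ m * θ := mul_nonneg hm0 hθ0
    have hcase : M * T ≤ 4 * L * (Kr + Real.pi) * (|a - a'| + m * θ) := by
      by_cases hγ : α' = 1
      · by_cases hm2 : (1:ℝ)/2 ≤ m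
        · have h1 : M * T ≤ L * (Kr * (θ + |a - a'|)) :=
            mul_le_mul hML hT2gen hT20 hLnn
          have hθm : (1:ℝ) * θ ≤ (2 * m) * θ :=
            mul_le_mul_of_nonneg_right (by linarith only [hm2]) hθ0
          have q1 := mul_le_mul_of_nonneg_left hθm (mul_nonneg hLnn hKr0)
          have n1 : 0 ≤ L * Kr * |a - a'| := mul_nonneg (mul_nonneg hLnn hKr0) (abs_nonneg _)
          have n2 : 0 ≤ L * Real.pi * |a - a'| :=
            mul_nonneg (mul_nonneg hLnn Real.pi_nonneg) (abs_nonneg _)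
          have n3 : 0 ≤ L * Kr * (m * θ) := mul_nonneg (mul_nonneg hLnn hKr0) hmθ0
          have n4 : 0 ≤ L * Real.pi * (m * θ) :=
            mul_nonneg (mul_nonneg hLnn Real.pi_nonneg) hmθ0
          nlinarith only [h1, q1, n1, n2, n3, n4]
        · push_neg at hm2
          by_cases hboth : L - 1 ≤ a ∧ L - 1 ≤ a'
          · have hTz : T = 0 := by
              rw [hTdef, hγ, hgL a hboth.1, hgL a' hboth.2, one_mul, hσone, hf1, hf1,
                dist_self, min_eq_right Real.pi_nonneg]
            rw [hTz, mul_zero]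
            exact mul_nonneg (mul_nonneg (mul_nonneg (by norm_num) hLnn) hKπ0)
              (add_nonneg (abs_nonneg _) hmθ0)
          · have h12 : 1/2 ≤ |a - a'| := by
              have hm2' : min (L - a) (L - a') < 1/2 := by rw [← hm]; exact hm2
              rcases not_and_or.mp hboth with hb | hb <;> push_neg at hb <;>
                rcases min_lt_iff.mp hm2' with hx | hx <;> linarith
            have hMT : M * T ≤ L * Real.pi := mul_le_mul hML hT2π hT20 hLnn
            have q1 := mul_le_mul_of_nonneg_left h12
              (mul_nonneg (mul_nonneg (by norm_num : (0:ℝ) ≤ 2) hLnn) Real.pi_nonneg)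
            have n1 : 0 ≤ L * Kr * |a - a'| := mul_nonneg (mul_nonneg hLnn hKr0) (abs_nonneg _)
            have n2 : 0 ≤ L * Real.pi * |a - a'| :=
              mul_nonneg (mul_nonneg hLnn Real.pi_nonneg) (abs_nonneg _)
            have n3 : 0 ≤ L * Kr * (m * θ) := mul_nonneg (mul_nonneg hLnn hKr0) hmθ0
            have n4 : 0 ≤ L * Real.pi * (m * θ) :=
              mul_nonneg (mul_nonneg hLnn Real.pi_nonneg) hmθ0
            nlinarith only [hMT, q1, n1, n2, n3, n4]
      · have hα'lt : α' < 1 := lt_of_le_of_ne hα'1 hγ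
        have h2t : 2 * (t:ℝ) < 1 := by
          by_contra hcon
          push_neg at hcon
          rw [hα', min_eq_right hcon] at hα'lt
          exact lt_irrefl _ hα'lt
        have hβ'1eq : β' = 1 := by rw [hβ']; exact min_eq_left (by linarith)
        have hMr' : M ≤ L - a' := by
          rw [hM, hβ'1eq, one_mul]
          exact min_le_right _ _
        have hMT : M * T ≤ (L - a') * (Kr * (θ + |a - a'|)) :=
          mul_le_mul hMr' hT2gen hT20 (by linarith)
        have e1 : (L - a') * (Kr * θ) ≤ (m + |a - a'|) * (Kr * θ) := by
          apply mul_le_mul_of_nonneg_right _ (mul_nonneg hKr0 hθ0)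
          rcases le_total (L - a) (L - a') with hx | hx
          · rw [hm, min_eq_left hx]; linarith
          · rw [hm, min_eq_right hx]; linarith
        have e2 : (Kr * |a - a'|) * θ ≤ (Kr * |a - a'|) * Real.pi :=
          mul_le_mul_of_nonneg_left hθπ (mul_nonneg hKr0 (abs_nonneg _))
        have e3 : (L - a') * (Kr * |a - a'|) ≤ L * (Kr * |a - a'|) :=
          mul_le_mul_of_nonneg_right (by linarith) (mul_nonneg hKr0 (abs_nonneg _))
        have n1 : 0 ≤ Kr * (3*L - Real.pi) * |a - a'| :=
          mul_nonneg (mul_nonneg hKr0 (by linarith only [hL, hπ4])) (abs_nonneg _)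
        have n2 : 0 ≤ L * Real.pi * |a - a'| :=
          mul_nonneg (mul_nonneg hLnn Real.pi_nonneg) (abs_nonneg _)
        have n3 : 0 ≤ Kr * (4*L - 1) * (m * θ) :=
          mul_nonneg (mul_nonneg hKr0 (by linarith only [hL])) hmθ0
        have n4 : 0 ≤ L * Real.pi * (m * θ) :=
          mul_nonneg (mul_nonneg hLnn Real.pi_nonneg) hmθ0
        nlinarith only [hMT, e1, e2, e3, n1, n2, n3, n4]
    -- assemble
    have hΘsplit : min Real.pi (dist (f (x, σ (α * g a))) (f (x', σ (α' * g a')))) ≤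
        dist (f (x, σ (α * g a))) (f (x, σ (α' * g a))) + T :=
      (minpi_tri dist_nonneg dist_nonneg (dist_triangle _ _ _)).trans
        (add_le_add_left (min_le_right _ _) _)
    have hMsplit : M * min Real.pi (dist (f (x, σ (α * g a))) (f (x', σ (α' * g a')))) ≤
        M * (dist (f (x, σ (α * g a))) (f (x, σ (α' * g a))) + T) :=
      mul_le_mul_of_nonneg_left hΘsplit hM0
    have hMd : M * dist (f (x, σ (α * g a))) (f (x, σ (α' * g a))) ≤
        L * (Kr * (2 * |(s:ℝ) - (t:ℝ)|)) :=
      mul_le_mul hML hT1 dist_nonneg hLnn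
    have hLKr6 : (6:ℝ) ≤ L * Kr := by nlinarith only [hL, hKr1]
    have m0 : 0 ≤ (L * Kr - 6) * |a - a'| :=
      mul_nonneg (by linarith only [hLKr6]) (abs_nonneg _)
    have n1 : 0 ≤ L * Kr * |a - a'| :=
      mul_nonneg (mul_nonneg hLnn hKr0) (abs_nonneg _)
    have n2 : 0 ≤ L * Real.pi * |a - a'| :=
      mul_nonneg (mul_nonneg hLnn Real.pi_nonneg) (abs_nonneg _)
    have n3 : 0 ≤ L * Kr * (m * θ) := mul_nonneg (mul_nonneg hLnn hKr0) hmθ0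
    have n4 : 0 ≤ L * Real.pi * (m * θ) := mul_nonneg (mul_nonneg hLnn Real.pi_nonneg) hmθ0
    have n5 : 0 ≤ L * Kr * |(s:ℝ) - (t:ℝ)| := mul_nonneg (mul_nonneg hLnn hKr0) hst0
    have n6 : 0 ≤ L * Real.pi * |(s:ℝ) - (t:ℝ)| :=
      mul_nonneg (mul_nonneg hLnn Real.pi_nonneg) hst0
    have n7 : 0 ≤ (L * (Kr - 1)) * |(s:ℝ) - (t:ℝ)| :=
      mul_nonneg (mul_nonneg hLnn (by linarith only [hKr1])) hst0
    nlinarith only [hpart1, hMsplit, hMd, hcase, m0, n1, n2, n3, n4, n5, n6, n7,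
      abs_nonneg (a - a')]
  -- the retraction
  refine ⟨fun q => (f (q.1.1, σ (min (2 * (q.2:ℝ)) 1 * g q.1.2)),
      min 1 (2 - 2 * (q.2:ℝ)) * q.1.2),
    Real.toNNReal (100 * Real.pi * L * (Kr + Real.pi)), ?_, ?_, ?_, ?_, ?_⟩
  · intro c hc t
    exact hht t c.2 hc
  · intro c c' hc hc' s t
    dsimp only
    have hKval : ((Real.toNNReal (100 * Real.pi * L * (Kr + Real.pi))) : ℝ) =
        100 * Real.pi * L * (Kr + Real.pi) :=
      Real.coe_toNNReal _ (by positivity)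
    have hh1 := hht s c.2 hc
    have hh2 := hht t c'.2 hc'
    have hb := hbound c.1 c'.1 c.2 c'.2 hc hc' s t
    have hcd := coneDist_le_D (f (c.1, σ (min (2 * (s:ℝ)) 1 * g c.2)), min 1 (2 - 2 * (s:ℝ)) * c.2)
      (f (c'.1, σ (min (2 * (t:ℝ)) 1 * g c'.2)), min 1 (2 - 2 * (t:ℝ)) * c'.2) hh1.2 hh2.2
    have hD := D_le_coneDist c c' hc.2 hc'.2
    have hdst : |(s:ℝ) - (t:ℝ)| = dist s t := by rw [Subtype.dist_eq, Real.dist_eq]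
    rw [hKval]
    rw [hdst] at hb
    have hcone0 : 0 ≤ coneDist L c c' := Real.sqrt_nonneg _
    have hmax1 : coneDist L c c' ≤ max (coneDist L c c') (dist s t) := le_max_left _ _
    have hmax2 : dist s t ≤ max (coneDist L c c') (dist s t) := le_max_right _ _
    have hmax0 : 0 ≤ max (coneDist L c c') (dist s t) :=
      le_trans dist_nonneg (le_max_right _ _)
    have hc0' : (0:ℝ) ≤ 10 * L * (Kr + Real.pi) := by positivity
    refine hcd.trans ?_
    have step2 := mul_le_mul_of_nonneg_left hb (by norm_num : (0:ℝ) ≤ 5)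
    refine step2.trans ?_
    have u1 := mul_le_mul_of_nonneg_left hD hc0'
    have u2 := mul_le_mul_of_nonneg_left hmax1 (mul_nonneg hc0' Real.pi_nonneg)
    have u3 := mul_le_mul_of_nonneg_left hmax2 hc0'
    have u4 : 0 ≤ (Real.pi - 1) * (10 * L * (Kr + Real.pi) * max (coneDist L c c') (dist s t)) :=
      mul_nonneg (by linarith only [hπ3]) (mul_nonneg hc0' hmax0)
    nlinarith only [u1, u2, u3, u4]
  · intro c hc
    dsimp only
    have h0 : ((0:unitInterval):ℝ) = 0 := rfl
    rw [h0]
    rw [show min (2 * (0:ℝ)) 1 = 0 by norm_num, zero_mul, hσzero, hf0,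
      show min (1:ℝ) (2 - 2 * 0) = 1 by norm_num, one_mul, Prod.mk.eta]
    rw [coneDist, dist_self, min_eq_right Real.pi_nonneg, Real.cos_zero,
      show (L - c.2)^2 + (L - c.2)^2 - 2*(L - c.2)*(L - c.2)*1 = 0 by ring, Real.sqrt_zero]
  · intro c hc
    dsimp only
    have h1 : ((1:unitInterval):ℝ) = 1 := rfl
    rw [h1, show (2:ℝ) - 2 * 1 = 0 by norm_num, show min (1:ℝ) 0 = 0 by norm_num, zero_mul]
  · intro c hc0 t
    dsimp only
    rw [hc0, hgzero, mul_zero, hσzero, hf0, mul_zero, ← hc0, Prod.mk.eta]
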